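/- Let S be any finite subset of the positive integers and let w be a permutation (word) of S. Then the equivalence class ⟨w⟩ under ∼ contains a permutation v = v_1 v_2 ⋯ v_k (a concatenation of blocks) such that (a) each block v_i is an increasing or decreasing sequence of consecutive integers, and (b) every u ∼ w has the form u = v'_1 v'_2 ⋯ v'_k where each v'_i is a word on the same underlying set as v_i with v'_i ∼ v_i. Moreover, v is unique up to reversing blocks v_i of length two. -/

import Mathlib

def AdjSwap1 (u v : List ℕ) : Prop :=
  ∃ (p q : List ℕ) (x y : ℕ), ((x : ℤ) - (y : ℤ)).natAbs = 1 ∧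
    u = p ++ x :: y :: q ∧ v = p ++ y :: x :: q

def ConsecRun (l : List ℕ) : Prop :=
  l ≠ [] ∧ (l.Chain' (fun a b => b = a + 1) ∨ l.Chain' (fun a b => a = b + 1))

def Decomposes (v : List (List ℕ)) (w : List ℕ) : Prop :=
  ∀ u : List ℕ, Relation.EqvGen AdjSwap1 w u →
    ∃ v' : List (List ℕ), u = v'.flatten ∧ v'.length = v.length ∧
      ∀ (idx : ℕ) (h1 : idx < v.length) (h2 : idx < v'.length),
        Relation.EqvGen AdjSwap1 (v.get ⟨idx, h1⟩) (v'.get ⟨idx, h2⟩)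


open List Relation

local notation a " ∼ " b => Relation.EqvGen AdjSwap1 a b
lemma AdjSwap1.symm' {u v : List ℕ} (h : AdjSwap1 u v) : AdjSwap1 v u := by
  obtain ⟨p, q, x, y, hxy, hu, hv⟩ := h
  exact ⟨p, q, y, x, by omega, hv, hu⟩

lemma AdjSwap1.perm {u v : List ℕ} (h : AdjSwap1 u v) : u.Perm v := by
  obtain ⟨p, q, x, y, hxy, hu, hv⟩ := h
  subst hu hv
  exact List.Perm.append_left p (List.Perm.swap' _ _ (List.Perm.refl q))

lemma eqv_perm {u v : List ℕ} (h : u ∼ v) : u.Perm v := by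
  induction h with
  | rel _ _ h => exact h.perm
  | refl => exact List.Perm.refl _
  | symm _ _ _ ih => exact ih.symm
  | trans _ _ _ _ _ ih1 ih2 => exact ih1.trans ih2

lemma adjswap_context {u v p q : List ℕ} (h : AdjSwap1 u v) :
    AdjSwap1 (p ++ u ++ q) (p ++ v ++ q) := by
  obtain ⟨p', q', x, y, hxy, hu, hv⟩ := h
  subst hu hv
  exact ⟨p ++ p', q' ++ q, x, y, hxy, by simp, by simp⟩

lemma eqv_context {u v : List ℕ} (p q : List ℕ) (h : u ∼ v) :
    (p ++ u ++ q) ∼ (p ++ v ++ q) := by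
  induction h with
  | rel _ _ h => exact EqvGen.rel _ _ (adjswap_context h)
  | refl => exact EqvGen.refl _
  | symm _ _ _ ih => exact EqvGen.symm _ _ ih
  | trans _ _ _ _ _ ih1 ih2 => exact EqvGen.trans _ _ _ ih1 ih2

lemma eqv_append_congr {u v s t : List ℕ} (h1 : u ∼ v) (h2 : s ∼ t) :
    (u ++ s) ∼ (v ++ t) := by
  have a : (u ++ s) ∼ (v ++ s) := by simpa using eqv_context [] s h1
  have b : (v ++ s) ∼ (v ++ t) := by simpa using eqv_context v [] h2
  exact EqvGen.trans _ _ _ a b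

lemma adjswap_reverse {u v : List ℕ} (h : AdjSwap1 u v) : AdjSwap1 u.reverse v.reverse := by
  obtain ⟨p, q, x, y, hxy, hu, hv⟩ := h
  subst hu hv
  exact ⟨q.reverse, p.reverse, y, x, by omega, by simp, by simp⟩

lemma eqv_reverse {u v : List ℕ} (h : u ∼ v) : u.reverse ∼ v.reverse := by
  induction h with
  | rel _ _ h => exact EqvGen.rel _ _ (adjswap_reverse h)
  | refl => exact EqvGen.refl _
  | symm _ _ _ ih => exact EqvGen.symm _ _ ih
  | trans _ _ _ _ _ ih1 ih2 => exact EqvGen.trans _ _ _ ih1 ih2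

/-- The invariant pair filter. -/
def FP (x y : ℕ) (l : List ℕ) : List ℕ := l.filter (fun z => z = x ∨ z = y)

lemma adjswap_FP {x y : ℕ} (hxy : 2 ≤ ((x:ℤ) - y).natAbs) {u v : List ℕ}
    (h : AdjSwap1 u v) : FP x y u = FP x y v := by
  obtain ⟨p, q, a, b, hab, hu, hv⟩ := h
  subst hu hv
  unfold FP
  simp only [List.filter_append, List.filter_cons]
  have : ¬ ((a = x ∨ a = y) ∧ (b = x ∨ b = y)) := by
    rintro ⟨ha | ha, hb | hb⟩ <;> omega
  by_cases ha : (a = x ∨ a = y) <;> by_cases hb : (b = x ∨ b = y) <;>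
    simp [ha, hb] <;> tauto

lemma eqv_FP {x y : ℕ} (hxy : 2 ≤ ((x:ℤ) - y).natAbs) {u v : List ℕ}
    (h : u ∼ v) : FP x y u = FP x y v := by
  induction h with
  | rel _ _ h => exact adjswap_FP hxy h
  | refl => rfl
  | symm _ _ _ ih => exact ih.symm
  | trans _ _ _ _ _ ih1 ih2 => exact ih1.trans ih2
lemma chain'_up_range' (a n : ℕ) : (range' a n).Chain' (fun p q => q = p + 1) := by
  rw [List.Chain', List.isChain_iff_getElem]
  intro i h
  simp only [List.getElem_range', List.get_eq_getElem]
  omega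

lemma chain'_dn_range'_rev (a n : ℕ) :
    ((range' a n).reverse).Chain' (fun p q => p = q + 1) := by
  rw [List.Chain', List.isChain_reverse]
  have := chain'_up_range' a n
  apply List.IsChain.imp _ this
  intro p q h
  simpa [flip] using h

lemma up_eq_range' {l : List ℕ} (hne : l ≠ []) (hc : l.Chain' (fun a b => b = a + 1)) :
    l = range' (l.head hne) l.length := by
  apply List.ext_get (by simp)
  intro n h1 h2
  rw [List.Chain', List.isChain_iff_getElem] at hc
  induction n with
  | zero => simp [List.getElem_range', List.get_eq_getElem]; exact (List.head_eq_getElem (l := l) hne).symm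
  | succ k ih =>
    have hk : k < l.length := by omega
    have := hc k (by omega)
    have ihk := ih hk (by simp; omega)
    simp only [List.get_eq_getElem] at *
    rw [this, ihk]
    simp [List.getElem_range']
    ring
-- normalization
lemma ConsecRun.norm {l : List ℕ} (h : ConsecRun l) :
    ∃ a n, 0 < n ∧ (l = range' a n ∨ l = (range' a n).reverse) := by
  obtain ⟨hne, hc | hc⟩ := h
  · exact ⟨l.head hne, l.length, List.length_pos_of_ne_nil hne,
      Or.inl (up_eq_range' hne hc)⟩
  · have hne' : l.reverse ≠ [] := by simpa using hne
    have hc' : l.reverse.Chain' (fun a b => b = a + 1) := by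
      rw [List.Chain', List.isChain_reverse]
      apply List.IsChain.imp _ hc
      intro p q h
      simpa [flip] using h
    refine ⟨l.reverse.head hne', l.reverse.length, List.length_pos_of_ne_nil hne', Or.inr ?_⟩
    have := up_eq_range' hne' hc'
    rw [← this, List.reverse_reverse]
-- filter computations
lemma FP_range'_high {x y : ℕ} (hxy : x < y) : ∀ n a, y < a → FP x y (range' a n) = [] := by
  intro n a ha
  apply List.filter_eq_nil_iff.mpr
  intro z hz
  rw [List.mem_range'_1] at hz
  simp only [decide_eq_true_eq]
  omega
lemma FP_range'_mid {x y : ℕ} (hxy : x < y) : ∀ n a, x < a → a ≤ y → y < a + n →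
    FP x y (range' a n) = [y] := by
  intro n
  induction n with
  | zero => intro a _ _ h; omega
  | succ k ih =>
    intro a h1 h2 h3
    rw [List.range'_succ]
    unfold FP
    rw [List.filter_cons]
    by_cases hay : a = y
    · subst hay
      simp only [decide_eq_true_eq]
      have : ((a = x ∨ a = a) : Prop) := Or.inr rfl
      rw [if_pos (by simpa using this)]
      have : FP x a (range' (a+1) k) = [] := FP_range'_high hxy k (a+1) (by omega)
      unfold FP at this
      rw [this]
    · have : ¬ ((a = x ∨ a = y) : Prop) := by omega
      rw [if_neg (by simpa using this)]
      exact ih (a+1) (by omega) (by omega) (by omega)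
lemma FP_range'_pair {x y : ℕ} (hxy : x < y) : ∀ n a, a ≤ x → y < a + n →
    FP x y (range' a n) = [x, y] := by
  intro n
  induction n with
  | zero => intro a _ h; omega
  | succ k ih =>
    intro a h1 h3
    rw [List.range'_succ]
    unfold FP
    rw [List.filter_cons]
    by_cases hax : a = x
    · subst hax
      have : ((a = a ∨ a = y) : Prop) := Or.inl rfl
      rw [if_pos (by simpa using this)]
      have : FP a y (range' (a+1) k) = [y] := FP_range'_mid hxy k (a+1) (by omega) (by omega) (by omega)
      unfold FP at this
      rw [this]
    · have : ¬ ((a = x ∨ a = y) : Prop) := by omega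
      rw [if_neg (by simpa using this)]
      exact ih (a+1) (by omega) (by omega)

lemma FP_reverse (x y : ℕ) (l : List ℕ) : FP x y l.reverse = (FP x y l).reverse :=
  List.filter_reverse

lemma mem_of_eqv_range' {u : List ℕ} {a m : ℕ} {z : ℕ}
    (h : u ∼ range' a m) (hz : z ∈ u) : a ≤ z ∧ z < a + m := by
  have := (eqv_perm h).mem_iff.mp hz
  rwa [List.mem_range'_1] at this

lemma last_of_equiv_inc {u : List ℕ} {a m : ℕ} (h : u ∼ range' a m)
    (hne : u ≠ []) : a + m ≤ u.getLast hne + 2 := by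
  by_contra hcon
  push_neg at hcon
  set ℓ := u.getLast hne with hℓ
  set top := a + m - 1 with htop
  have hmem : a ≤ ℓ ∧ ℓ < a + m := mem_of_eqv_range' h (List.getLast_mem hne)
  have h1 : FP ℓ top (range' a m) = [ℓ, top] :=
    FP_range'_pair (by omega) m a (by omega) (by omega)
  have h2 : FP ℓ top u = [ℓ, top] := by
    rw [eqv_FP (by omega) h, h1]
  have h3 : u = u.dropLast ++ [ℓ] := (List.dropLast_append_getLast hne).symm
  have h4 : FP ℓ top u = FP ℓ top u.dropLast ++ [ℓ] := by
    conv_lhs => rw [h3]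
    unfold FP
    rw [List.filter_append]
    simp
  rw [h2] at h4
  have : top = ℓ := by
    have := congrArg (fun l => List.getLast? l) h4
    simp at this
    omega
  omega

lemma last_of_equiv_dec {u : List ℕ} {a m : ℕ} (h : u ∼ (range' a m).reverse)
    (hne : u ≠ []) : u.getLast hne ≤ a + 1 := by
  by_contra hcon
  push_neg at hcon
  set ℓ := u.getLast hne with hℓ
  have hmem : a ≤ ℓ ∧ ℓ < a + m := by
    have := (eqv_perm h).mem_iff.mp (List.getLast_mem hne)
    rw [List.mem_reverse, List.mem_range'_1] at this
    exact this
  have h1 : FP a ℓ ((range' a m).reverse) = [ℓ, a] := by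
    rw [FP_reverse, FP_range'_pair (by omega) m a (by omega) (by omega)]
    rfl
  have h2 : FP a ℓ u = [ℓ, a] := by rw [eqv_FP (by omega) h, h1]
  have h3 : u = u.dropLast ++ [ℓ] := (List.dropLast_append_getLast hne).symm
  have h4 : FP a ℓ u = FP a ℓ u.dropLast ++ [ℓ] := by
    conv_lhs => rw [h3]
    unfold FP
    rw [List.filter_append]
    simp
  rw [h2] at h4
  have : a = ℓ := by
    have := congrArg (fun l => List.getLast? l) h4
    simp at this
    omega
  omega

lemma head_of_equiv_inc {u : List ℕ} {a m : ℕ} (h : u ∼ range' a m)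
    (hne : u ≠ []) : u.head hne ≤ a + 1 := by
  have hrev : (u.reverse) ∼ ((range' a m).reverse) := eqv_reverse h
  have hne' : u.reverse ≠ [] := by simpa using hne
  have := last_of_equiv_dec hrev hne'
  rwa [List.getLast_reverse] at this

lemma head_of_equiv_dec {u : List ℕ} {a m : ℕ} (h : u ∼ (range' a m).reverse)
    (hne : u ≠ []) : a + m ≤ u.head hne + 2 := by
  have hrev : (u.reverse) ∼ (range' a m) := by
    have := eqv_reverse h
    rwa [List.reverse_reverse] at this
  have hne' : u.reverse ≠ [] := by simpa using hne
  have := last_of_equiv_inc hrev hne'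
  rwa [List.getLast_reverse] at this

def UpOK (l : List ℕ) : Prop := l.length ≤ 2 ∨ l.Chain' (fun a b => b = a + 1)
def DnOK (l : List ℕ) : Prop := l.length ≤ 2 ∨ l.Chain' (fun a b => a = b + 1)

def Mergeable (r s : List ℕ) : Prop := ∃ a m b k, 0 < m ∧ 0 < k ∧
  (r = range' a m ∨ r = (range' a m).reverse) ∧
  (s = range' b k ∨ s = (range' b k).reverse) ∧
  ((a + m = b ∧ UpOK r ∧ UpOK s) ∨ (b + k = a ∧ DnOK r ∧ DnOK s))

lemma swap2 (a : ℕ) : ([a+1, a] : List ℕ) ∼ [a, a+1] :=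
  Relation.EqvGen.rel _ _ ⟨[], [], a+1, a, by push_cast; omega, rfl, rfl⟩

lemma range'_two (a : ℕ) : range' a 2 = [a, a+1] := by
  simp [List.range'_succ]

lemma toInc {l : List ℕ} {a m : ℕ} (hn : l = range' a m ∨ l = (range' a m).reverse)
    (h : UpOK l) : l ∼ range' a m := by
  rcases hn with hn | hn
  · exact hn ▸ Relation.EqvGen.refl _
  · match m with
    | 0 => subst hn; exact Relation.EqvGen.refl _
    | 1 => subst hn; exact Relation.EqvGen.refl _
    | (m+2) =>
      rcases h with h | h
      · have hlen : l.length = m + 2 := by subst hn; simp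
        have hm : m = 0 := by omega
        subst hm
        rw [range'_two] at hn ⊢
        subst hn
        simpa using swap2 a
      · exfalso
        have e1 : range' a (m+2) = range' a (m+1) ++ [a+(m+1)] := List.range'_1_concat (s := a) (n := m+1)
        have e2 : range' a (m+1) = range' a m ++ [a+m] := List.range'_1_concat (s := a) (n := m)
        rw [e1, e2] at hn
        simp only [List.reverse_append, List.reverse_cons, List.reverse_nil] at hn
        rw [hn] at h
        simp only [List.Chain', List.nil_append, List.cons_append, List.isChain_cons_cons] at h
        omega

lemma toDec {l : List ℕ} {a m : ℕ} (hn : l = range' a m ∨ l = (range' a m).reverse)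
    (h : DnOK l) : l ∼ (range' a m).reverse := by
  rcases hn with hn | hn
  · match m with
    | 0 => subst hn; exact Relation.EqvGen.refl _
    | 1 => subst hn; exact Relation.EqvGen.refl _
    | (m+2) =>
      rcases h with h | h
      · have hlen : l.length = m + 2 := by subst hn; simp
        have hm : m = 0 := by omega
        subst hm
        rw [range'_two] at hn ⊢
        subst hn
        exact Relation.EqvGen.symm _ _ (by simpa using swap2 a)
      · exfalso
        have e1 : range' a (m+2) = a :: (a+1) :: range' (a+2) m := by
          rw [List.range'_succ, List.range'_succ]
        rw [e1] at hn
        rw [hn] at h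
        simp only [List.Chain', List.isChain_cons_cons] at h
        omega
  · exact hn ▸ Relation.EqvGen.refl _

lemma merge_of_mergeable {r s : List ℕ} (h : Mergeable r s) :
    ∃ t, ConsecRun t ∧ ((r ++ s) ∼ t) := by
  obtain ⟨a, m, b, k, hm, hk, hr, hs, hcase | hcase⟩ := h
  · obtain ⟨hab, hur, hus⟩ := hcase
    refine ⟨range' a (k+m), ⟨by simp; omega, Or.inl (chain'_up_range' _ _)⟩, ?_⟩
    have h1 : (r ++ s) ∼ (range' a m ++ range' b k) :=
      eqv_append_congr (toInc hr hur) (toInc hs hus)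
    have h2 : range' a m ++ range' b k = range' a (k+m) := by
      have := List.range'_append (s := a) (m := m) (n := k) (step := 1)
      simpa [hab.symm, Nat.add_comm k m] using this
    rw [h2] at h1
    exact h1
  · obtain ⟨hba, hdr, hds⟩ := hcase
    refine ⟨(range' b (m+k)).reverse, ⟨by simp; omega, Or.inr (chain'_dn_range'_rev _ _)⟩, ?_⟩
    have h1 : (r ++ s) ∼ ((range' a m).reverse ++ (range' b k).reverse) :=
      eqv_append_congr (toDec hr hdr) (toDec hs hds)
    have h2 : (range' b (m+k)).reverse = (range' a m).reverse ++ (range' b k).reverse := by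
      have := List.range'_append (s := b) (m := k) (n := m) (step := 1)
      rw [← List.reverse_append]
      congr 1
      rw [Nat.add_comm m k]
      rw [← this]
      simp [hba]
    rw [h2]
    exact h1

lemma flatten_split : ∀ (L : List (List ℕ)) (p q : List ℕ) (x y : ℕ),
    (∀ b ∈ L, b ≠ []) → L.flatten = p ++ x :: y :: q →
    (∃ L₁ p₁ q₁ L₂, L = L₁ ++ (p₁ ++ x :: y :: q₁) :: L₂ ∧
        p = L₁.flatten ++ p₁ ∧ q = q₁ ++ L₂.flatten) ∨
    (∃ L₁ p₁ q₂ L₂, L = L₁ ++ (p₁ ++ [x]) :: (y :: q₂) :: L₂ ∧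
        p = L₁.flatten ++ p₁ ∧ q = q₂ ++ L₂.flatten) := by
  intro L
  induction L with
  | nil =>
    intro p q x y _ h
    exfalso
    have := congrArg List.length h
    simp at this
  | cons b L' ih =>
    intro p q x y hne h
    rw [List.flatten_cons] at h
    have hrec : ∀ (a' : List ℕ), p = b ++ a' → L'.flatten = a' ++ x :: y :: q →
        (∃ L₁ p₁ q₁ L₂, b :: L' = L₁ ++ (p₁ ++ x :: y :: q₁) :: L₂ ∧
            p = L₁.flatten ++ p₁ ∧ q = q₁ ++ L₂.flatten) ∨
        (∃ L₁ p₁ q₂ L₂, b :: L' = L₁ ++ (p₁ ++ [x]) :: (y :: q₂) :: L₂ ∧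
            p = L₁.flatten ++ p₁ ∧ q = q₂ ++ L₂.flatten) := by
      intro a' hp hfl
      rcases ih a' q x y (fun c hc => hne c (List.mem_cons_of_mem _ hc)) hfl with
        ⟨L₁, p₁, q₁, L₂, hL, hp1, hq1⟩ | ⟨L₁, p₁, q₂, L₂, hL, hp1, hq1⟩
      · exact Or.inl ⟨b :: L₁, p₁, q₁, L₂, by simp [hL], by simp [hp, hp1], hq1⟩
      · exact Or.inr ⟨b :: L₁, p₁, q₂, L₂, by simp [hL], by simp [hp, hp1], hq1⟩
    rcases List.append_eq_append_iff.mp h with ⟨a', hp, hfl⟩ | ⟨c', hb, hq'⟩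
    · exact hrec a' hp hfl
    · -- b = p ++ c', x :: y :: q = c' ++ L'.flatten
      match c', hb, hq' with
      | [], hb, hq' =>
        exact hrec [] (by simp [hb]) hq'.symm
      | [x'], hb, hq' =>
        have hx : x = x' := by simpa using congrArg (fun l => l.head?) hq'
        subst hx
        have hfl : L'.flatten = y :: q := by
          simpa using (congrArg (fun l => l.tail) hq').symm
        match L', hfl with
        | c :: L₂, hfl =>
          have hcne : c ≠ [] := hne c (by simp)
          match c, hcne, hfl with
          | z :: ct, _, hfl =>
            rw [List.flatten_cons, List.cons_append] at hfl
            have hz : z = y := by simpa using congrArg (fun l => l.head?) hfl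
            have hq : q = ct ++ L₂.flatten := by
              simpa using (congrArg (fun l => l.tail) hfl).symm
            subst hz
            exact Or.inr ⟨[], p, ct, L₂, by simp [hb], by simp, hq⟩
      | (x' :: y' :: a''), hb, hq' =>
        have hx : x = x' := by simpa using congrArg (fun l => l.head?) hq'
        have hy : y = y' := by simpa using congrArg (fun l => l.tail.head?) hq'
        subst hx hy
        have hq : q = a'' ++ L'.flatten := by
          simpa using congrArg (fun l => l.tail.tail) hq'
        exact Or.inl ⟨[], p, a'', L', by simp [hb], by simp, hq⟩

lemma forall₂_split_right {R : List ℕ → List ℕ → Prop} :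
    ∀ (L₁ : List (List ℕ)) (c : List ℕ) (L₂ v : List (List ℕ)),
    List.Forall₂ R v (L₁ ++ c :: L₂) →
    ∃ m₁ r m₂, v = m₁ ++ r :: m₂ ∧ List.Forall₂ R m₁ L₁ ∧ R r c ∧ List.Forall₂ R m₂ L₂ := by
  intro L₁
  induction L₁ with
  | nil =>
    intro c L₂ v h
    rw [List.nil_append] at h
    cases h with
    | cons hrc hf => exact ⟨[], _, _, rfl, List.Forall₂.nil, hrc, hf⟩
  | cons d L₁' ih =>
    intro c L₂ v h
    rw [List.cons_append] at h
    cases h with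
    | cons hrd hf =>
      obtain ⟨m₁, r, m₂, hv, h1, h2, h3⟩ := ih c L₂ _ hf
      exact ⟨_ :: m₁, r, m₂, by simp [hv], List.Forall₂.cons hrd h1, h2, h3⟩

lemma forall₂_mem_right {R : List ℕ → List ℕ → Prop} :
    ∀ {v v' : List (List ℕ)}, List.Forall₂ R v v' → ∀ c ∈ v', ∃ b ∈ v, R b c := by
  intro v v' h
  induction h with
  | nil => intro c hc; simp at hc
  | cons hr hf ih =>
    intro c hc
    rcases List.mem_cons.mp hc with hc | hc
    · exact ⟨_, by simp, hc ▸ hr⟩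
    · obtain ⟨b, hb, hrb⟩ := ih c hc
      exact ⟨b, List.mem_cons_of_mem _ hb, hrb⟩

lemma eqv_ne_nil {r c : List ℕ} (h : r ∼ c) (hr : r ≠ []) : c ≠ [] := by
  intro hc
  apply hr
  have := (eqv_perm h).length_eq
  rw [hc] at this
  simpa using this

lemma noMerge_step (v : List (List ℕ)) (hr : ∀ b ∈ v, ConsecRun b) (hnd : v.flatten.Nodup)
    (hnm : ∀ m₁ r s m₂, v = m₁ ++ r :: s :: m₂ → ¬ Mergeable r s)
    {a b : List ℕ} (hs : AdjSwap1 a b)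
    (hP : ∃ v', a = v'.flatten ∧ List.Forall₂ (Relation.EqvGen AdjSwap1) v v') :
    ∃ v', b = v'.flatten ∧ List.Forall₂ (Relation.EqvGen AdjSwap1) v v' := by
  obtain ⟨v', ha, hf⟩ := hP
  obtain ⟨p, q, x, y, hxy, hap, hbp⟩ := hs
  have hne : ∀ c ∈ v', c ≠ [] := by
    intro c hc
    obtain ⟨b0, hb0, hrb⟩ := forall₂_mem_right hf c hc
    exact eqv_ne_nil hrb (hr b0 hb0).1
  have hfl : v'.flatten = p ++ x :: y :: q := by rw [← ha, hap]
  rcases flatten_split v' p q x y hne hfl with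
    ⟨L₁, p₁, q₁, L₂, hv', hp, hq⟩ | ⟨L₁, p₁, q₂, L₂, hv', hp, hq⟩
  · -- swap inside one block
    obtain ⟨m₁, r, m₂, hv, h1, h2, h3⟩ := forall₂_split_right L₁ _ L₂ v (hv' ▸ hf)
    refine ⟨L₁ ++ (p₁ ++ y :: x :: q₁) :: L₂, ?_, ?_⟩
    · rw [hbp, hp, hq]
      simp
    · rw [hv]
      exact List.rel_append h1 (List.Forall₂.cons
        (Relation.EqvGen.trans _ _ _ h2
          (Relation.EqvGen.rel _ _ ⟨p₁, q₁, x, y, hxy, rfl, rfl⟩)) h3)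
  · -- straddle: contradiction
    exfalso
    obtain ⟨m₁, r, m₂0, hv0, h1, h2, h30⟩ := forall₂_split_right L₁ _ _ v (hv' ▸ hf)
    cases h30 with
    | cons h3 h4 =>
      rename_i s m₂
      have hv : v = m₁ ++ r :: s :: m₂ := hv0
      have hrr : ConsecRun r := hr r (by rw [hv]; simp)
      have hss : ConsecRun s := hr s (by rw [hv]; simp)
      obtain ⟨a1, n1, hn1, hnr⟩ := hrr.norm
      obtain ⟨a2, n2, hn2, hns⟩ := hss.norm
      -- x in interval of r
      have hxr : x ∈ r := (eqv_perm h2).symm.mem_iff.mp (by simp)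
      have hys : y ∈ s := (eqv_perm h3).symm.mem_iff.mp (by simp)
      have hxb : a1 ≤ x ∧ x < a1 + n1 := by
        rcases hnr with h' | h' <;> rw [h'] at hxr <;>
          first
          | exact List.mem_range'_1.mp hxr
          | exact List.mem_range'_1.mp (List.mem_reverse.mp hxr)
      have hyb : a2 ≤ y ∧ y < a2 + n2 := by
        rcases hns with h' | h' <;> rw [h'] at hys <;>
          first
          | exact List.mem_range'_1.mp hys
          | exact List.mem_range'_1.mp (List.mem_reverse.mp hys)
      -- disjointness of r and s
      have hdisj : r.Disjoint s := by
        have hinf : (r ++ s) <+ v.flatten :=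
          List.IsInfix.sublist ⟨m₁.flatten, m₂.flatten, by rw [hv]; simp⟩
        have := List.nodup_append'.mp (hnd.sublist hinf)
        exact this.2.2
      have hsep : a1 + n1 ≤ a2 ∨ a2 + n2 ≤ a1 := by
        by_contra hcon
        push_neg at hcon
        have hz1 : max a1 a2 ∈ r := by
          rcases hnr with h' | h' <;> rw [h'] <;>
            [skip; rw [List.mem_reverse]] <;>
            exact List.mem_range'_1.mpr (by omega)
        have hz2 : max a1 a2 ∈ s := by
          rcases hns with h' | h' <;> rw [h'] <;>
            [skip; rw [List.mem_reverse]] <;>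
            exact List.mem_range'_1.mpr (by omega)
        exact hdisj hz1 hz2
      have hrlen : r.length = n1 := by rcases hnr with h' | h' <;> simp [h']
      have hslen : s.length = n2 := by rcases hns with h' | h' <;> simp [h']
      have hx1 : x = y + 1 ∨ y = x + 1 := by omega
      -- b1 = p₁ ++ [x], last = x ; b2 = y :: q₂, head = y
      have hlast : (p₁ ++ [x]).getLast (by simp) = x := List.getLast_concat ..
      have hhead : (y :: q₂).head (by simp) = y := rfl
      rcases hsep with hsep | hsep
      · -- r below s : y = x + 1, x = a1+n1-1, y = a2, a1+n1 = a2
        have hkey : y = x + 1 ∧ x + 1 = a2 ∧ a1 + n1 = a2 := by omega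
        have hur : UpOK r := by
          by_contra hu
          rcases hnr with h' | h'
          · exact hu (Or.inr (h' ▸ chain'_up_range' a1 n1))
          · have h3' : Relation.EqvGen AdjSwap1 (p₁ ++ [x]) ((range' a1 n1).reverse) := by
              rw [← h']
              exact Relation.EqvGen.symm _ _ h2
            have := last_of_equiv_dec h3' (by simp)
            rw [hlast] at this
            have hlen3 : 3 ≤ n1 := by
              rcases Nat.lt_or_ge n1 3 with hh | hh
              · exact absurd (Or.inl (by omega)) hu
              · exact hh
            omega
        have hus : UpOK s := by
          by_contra hu
          rcases hns with h' | h'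
          · exact hu (Or.inr (h' ▸ chain'_up_range' a2 n2))
          · have h3' : Relation.EqvGen AdjSwap1 (y :: q₂) ((range' a2 n2).reverse) := by
              rw [← h']
              exact Relation.EqvGen.symm _ _ h3
            have := head_of_equiv_dec h3' (by simp)
            rw [hhead] at this
            have hlen3 : 3 ≤ n2 := by
              rcases Nat.lt_or_ge n2 3 with hh | hh
              · exact absurd (Or.inl (by omega)) hu
              · exact hh
            omega
        exact hnm m₁ r s m₂ hv ⟨a1, n1, a2, n2, hn1, hn2, hnr, hns,
          Or.inl ⟨by omega, hur, hus⟩⟩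
      · -- s below r : x = y + 1, x = a1, y = a2+n2-1, a2+n2 = a1
        have hdr : DnOK r := by
          by_contra hu
          rcases hnr with h' | h'
          · have h3' : Relation.EqvGen AdjSwap1 (p₁ ++ [x]) (range' a1 n1) := by
              rw [← h']
              exact Relation.EqvGen.symm _ _ h2
            have := last_of_equiv_inc h3' (by simp)
            rw [hlast] at this
            have hlen3 : 3 ≤ n1 := by
              rcases Nat.lt_or_ge n1 3 with hh | hh
              · exact absurd (Or.inl (by omega)) hu
              · exact hh
            omega
          · exact hu (Or.inr (h' ▸ chain'_dn_range'_rev a1 n1))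
        have hds : DnOK s := by
          by_contra hu
          rcases hns with h' | h'
          · have h3' : Relation.EqvGen AdjSwap1 (y :: q₂) (range' a2 n2) := by
              rw [← h']
              exact Relation.EqvGen.symm _ _ h3
            have := head_of_equiv_inc h3' (by simp)
            rw [hhead] at this
            have hlen3 : 3 ≤ n2 := by
              rcases Nat.lt_or_ge n2 3 with hh | hh
              · exact absurd (Or.inl (by omega)) hu
              · exact hh
            omega
          · exact hu (Or.inr (h' ▸ chain'_dn_range'_rev a2 n2))
        exact hnm m₁ r s m₂ hv ⟨a1, n1, a2, n2, hn1, hn2, hnr, hns,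
          Or.inr ⟨by omega, hdr, hds⟩⟩

lemma forall₂_eqv_refl (v : List (List ℕ)) :
    List.Forall₂ (Relation.EqvGen AdjSwap1) v v := by
  induction v with
  | nil => exact List.Forall₂.nil
  | cons b v ih => exact List.Forall₂.cons (Relation.EqvGen.refl _) ih

lemma decomposes_of_noMerge (v : List (List ℕ)) (hr : ∀ b ∈ v, ConsecRun b)
    (hnd : v.flatten.Nodup)
    (hnm : ∀ m₁ r s m₂, v = m₁ ++ r :: s :: m₂ → ¬ Mergeable r s) :
    ∀ u, (v.flatten ∼ u) →
      ∃ v', u = v'.flatten ∧ List.Forall₂ (Relation.EqvGen AdjSwap1) v v' := by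
  set P : List ℕ → Prop :=
    fun u => ∃ v', u = v'.flatten ∧ List.Forall₂ (Relation.EqvGen AdjSwap1) v v' with hP
  have key : ∀ a b, (a ∼ b) → (P a ↔ P b) := by
    intro a b h
    induction h with
    | rel a b h => exact ⟨noMerge_step v hr hnd hnm h, noMerge_step v hr hnd hnm h.symm'⟩
    | refl => exact Iff.rfl
    | symm _ _ _ ih => exact ih.symm
    | trans _ _ _ _ _ ih1 ih2 => exact ih1.trans ih2
  intro u hu
  exact (key _ _ hu).mp ⟨v, rfl, forall₂_eqv_refl v⟩

lemma exist_core : ∀ n (v : List (List ℕ)), v.length ≤ n → (∀ b ∈ v, ConsecRun b) →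
    v.flatten.Nodup →
    ∃ v', ((v.flatten) ∼ v'.flatten) ∧ (∀ b ∈ v', ConsecRun b) ∧
      ∀ u, ((v.flatten) ∼ u) →
        ∃ v'', u = v''.flatten ∧ List.Forall₂ (Relation.EqvGen AdjSwap1) v' v'' := by
  intro n
  induction n with
  | zero =>
    intro v hlen hr hnd
    refine ⟨v, Relation.EqvGen.refl _, hr, ?_⟩
    apply decomposes_of_noMerge v hr hnd
    intro m₁ r s m₂ hv _
    rw [hv] at hlen
    simp at hlen
  | succ n ih =>
    intro v hlen hr hnd
    by_cases hex : ∃ m₁ r s m₂, v = m₁ ++ r :: s :: m₂ ∧ Mergeable r s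
    · obtain ⟨m₁, r, s, m₂, hv, hm⟩ := hex
      obtain ⟨t, hct, hts⟩ := merge_of_mergeable hm
      set v₂ := m₁ ++ t :: m₂ with hv₂
      have hflat : (v.flatten) ∼ v₂.flatten := by
        have h1 : v.flatten = m₁.flatten ++ (r ++ s) ++ m₂.flatten := by rw [hv]; simp
        have h2 : v₂.flatten = m₁.flatten ++ t ++ m₂.flatten := by rw [hv₂]; simp
        rw [h1, h2]
        exact eqv_context _ _ hts
      have hlen₂ : v₂.length ≤ n := by
        rw [hv] at hlen
        simp at hlen
        simp [hv₂]
        omega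
      have hr₂ : ∀ b ∈ v₂, ConsecRun b := by
        intro b hb
        rw [hv₂] at hb
        rcases List.mem_append.mp hb with hb | hb
        · exact hr b (by rw [hv]; exact List.mem_append.mpr (Or.inl hb))
        · rcases List.mem_cons.mp hb with hb | hb
          · exact hb ▸ hct
          · exact hr b (by rw [hv]; simp [hb])
      have hnd₂ : v₂.flatten.Nodup := ((eqv_perm hflat).nodup_iff).mp hnd
      obtain ⟨v', hv'e, hv'r, hv'd⟩ := ih v₂ hlen₂ hr₂ hnd₂
      refine ⟨v', Relation.EqvGen.trans _ _ _ hflat hv'e, hv'r, ?_⟩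
      intro u hu
      exact hv'd u (Relation.EqvGen.trans _ _ _ (Relation.EqvGen.symm _ _ hflat) hu)
    · push_neg at hex
      refine ⟨v, Relation.EqvGen.refl _, hr, ?_⟩
      apply decomposes_of_noMerge v hr hnd
      intro m₁ r s m₂ hv
      exact hex m₁ r s m₂ hv

def IsCut (L : List ℕ) (p : ℕ) : Prop := ∃ i, (L.take i).sum = p

lemma not_cut_inside : ∀ (L : List (List ℕ)), (∀ b ∈ L, b ≠ []) → ∀ p,
    p < L.flatten.length → ¬ IsCut (L.map List.length) p →
    ∃ L₁ b L₂ j, L = L₁ ++ b :: L₂ ∧ p = L₁.flatten.length + j ∧ 0 < j ∧ j < b.length := by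
  intro L
  induction L with
  | nil => intro _ p hp _; simp at hp
  | cons b L' ih =>
    intro hne p hp hcut
    by_cases hpb : p < b.length
    · have hp0 : 0 < p := by
        rcases Nat.eq_zero_or_pos p with h0 | h0
        · exact absurd ⟨0, by simp [h0]⟩ hcut
        · exact h0
      exact ⟨[], b, L', p, by simp, by simp, hp0, hpb⟩
    · push_neg at hpb
      have hcut' : ¬ IsCut (L'.map List.length) (p - b.length) := by
        rintro ⟨i, hi⟩
        exact hcut ⟨i + 1, by simp [List.take_succ_cons, hi]; omega⟩
      have hp' : p - b.length < L'.flatten.length := by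
        rw [List.flatten_cons, List.length_append] at hp
        omega
      obtain ⟨L₁, c, L₂, j, hL, hpj, hj1, hj2⟩ :=
        ih (fun x hx => hne x (List.mem_cons_of_mem _ hx)) _ hp' hcut'
      exact ⟨b :: L₁, c, L₂, j, by simp [hL], by simp only [List.flatten_cons, List.length_append]; omega, hj1, hj2⟩

lemma run_adj {b : List ℕ} (h : ConsecRun b) {b₁ b₂ : List ℕ} {z₁ z₂ : ℕ}
    (he : b = b₁ ++ z₁ :: z₂ :: b₂) : ((z₁:ℤ) - z₂).natAbs = 1 := by
  have hinf : [z₁, z₂] <:+: b := ⟨b₁, b₂, by rw [he]; simp⟩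
  rcases h.2 with hc | hc
  · have := (hc.infix hinf)
    rw [List.isChain_cons_cons] at this
    have := this.1
    omega
  · have := (hc.infix hinf)
    rw [List.isChain_cons_cons] at this
    have := this.1
    omega

lemma take_flatten : ∀ (V : List (List ℕ)) (i : ℕ),
    V.flatten.take (((V.map List.length).take i).sum) = (V.take i).flatten := by
  intro V
  induction V with
  | nil => intro i; simp
  | cons b V' ih =>
    intro i
    cases i with
    | zero => simp
    | succ i =>
      simp only [List.map_cons, List.take_succ_cons, List.sum_cons, List.flatten_cons]
      rw [List.take_append, List.take_of_length_le (Nat.le_add_right _ _), Nat.add_sub_cancel_left, ih]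

lemma perm_flatten_forall₂ : ∀ {L M : List (List ℕ)},
    List.Forall₂ List.Perm L M → L.flatten.Perm M.flatten := by
  intro L M h
  induction h with
  | nil => exact List.Perm.refl _
  | cons h1 h2 ih => exact h1.append ih

lemma blocks_eq_of_flatten_eq : ∀ (L M : List (List ℕ)),
    L.map List.length = M.map List.length → L.flatten = M.flatten → L = M := by
  intro L
  induction L with
  | nil =>
    intro M h _
    cases M with
    | nil => rfl
    | cons c M' => simp at h
  | cons b L' ih =>
    intro M h hf
    cases M with
    | nil => simp at h
    | cons c M' =>
      simp only [List.map_cons, List.cons.injEq] at h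
      rw [List.flatten_cons, List.flatten_cons] at hf
      obtain ⟨hbc, hrest⟩ := List.append_inj hf h.1
      rw [ih M' h.2 hrest, hbc]

lemma forall₂_map_length : ∀ {v v' : List (List ℕ)},
    List.Forall₂ (Relation.EqvGen AdjSwap1) v v' → v.map List.length = v'.map List.length := by
  intro v v' h
  induction h with
  | nil => rfl
  | cons h1 h2 ih => simp [ih, (eqv_perm h1).length_eq]

lemma cutlens_eq : ∀ (A B : List ℕ), (∀ a ∈ A, 0 < a) → (∀ b ∈ B, 0 < b) →
    A.sum = B.sum → (∀ p, IsCut A p → IsCut B p) → (∀ p, IsCut B p → IsCut A p) → A = B := by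
  intro A
  induction A with
  | nil =>
    intro B _ hBpos hsum _ _
    cases B with
    | nil => rfl
    | cons b B' =>
      exfalso
      have := hBpos b (by simp)
      simp at hsum
      omega
  | cons a A' ih =>
    intro B hApos hBpos hsum hAB hBA
    cases B with
    | nil =>
      exfalso
      have := hApos a (by simp)
      simp at hsum
      omega
    | cons b B' =>
      have hba : b ≤ a := by
        obtain ⟨i, hi⟩ := hAB a ⟨1, by simp⟩
        cases i with
        | zero => simp at hi; have := hApos a (by simp); omega
        | succ i =>
          simp only [List.take_succ_cons, List.sum_cons] at hi
          omega
      have hab : a ≤ b := by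
        obtain ⟨i, hi⟩ := hBA b ⟨1, by simp⟩
        cases i with
        | zero => simp at hi; have := hBpos b (by simp); omega
        | succ i =>
          simp only [List.take_succ_cons, List.sum_cons] at hi
          omega
      have heq : a = b := le_antisymm hab hba
      subst heq
      have htail : A' = B' := by
        apply ih B' (fun x hx => hApos x (by simp [hx])) (fun x hx => hBpos x (by simp [hx]))
        · simp at hsum; omega
        · intro p ⟨i, hi⟩
          obtain ⟨i', hi'⟩ := hAB (a + p) ⟨i + 1, by simp [hi]⟩
          cases i' with
          | zero => simp at hi'; have := hApos a (by simp); exact ⟨0, by simp; omega⟩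
          | succ i' =>
            simp only [List.take_succ_cons, List.sum_cons] at hi'
            exact ⟨i', by omega⟩
        · intro p ⟨i, hi⟩
          obtain ⟨i', hi'⟩ := hBA (a + p) ⟨i + 1, by simp [hi]⟩
          cases i' with
          | zero => simp at hi'; have := hApos a (by simp); exact ⟨0, by simp; omega⟩
          | succ i' =>
            simp only [List.take_succ_cons, List.sum_cons] at hi'
            exact ⟨i', by omega⟩
      rw [htail]

lemma decomposes_unpack {v : List (List ℕ)} {w u : List ℕ} (hdec : Decomposes v w)
    (hu : w ∼ u) :
    ∃ v', u = v'.flatten ∧ List.Forall₂ (Relation.EqvGen AdjSwap1) v v' := by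
  obtain ⟨v', h1, h2, h3⟩ := hdec u hu
  exact ⟨v', h1, List.forall₂_iff_get.mpr ⟨h2.symm, h3⟩⟩

lemma sum_take_le (L : List ℕ) (i : ℕ) : (L.take i).sum ≤ L.sum := by
  conv_rhs => rw [← List.take_append_drop i L]
  rw [List.sum_append]
  omega

lemma cut_rigid {w : List ℕ} {v v₂ : List (List ℕ)} (hdec : Decomposes v w)
    (h2 : (w ∼ v₂.flatten)) (h2r : ∀ b ∈ v₂, ConsecRun b)
    (hsum : (v.map List.length).sum = v₂.flatten.length) :
    ∀ p, IsCut (v.map List.length) p → IsCut (v₂.map List.length) p := by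
  rintro p ⟨i, hi⟩
  have hple : p ≤ v₂.flatten.length := by
    rw [← hsum]
    exact hi ▸ sum_take_le _ i
  rcases Nat.eq_or_lt_of_le hple with hpe | hplt
  · exact ⟨v₂.length, by
      have : (v₂.map List.length).take v₂.length = v₂.map List.length := by
        apply List.take_of_length_le
        simp
      rw [this, ← List.length_flatten, hpe]⟩
  by_contra hcut
  obtain ⟨m₁, b, m₂, j, hv₂, hpj, hj1, hj2⟩ :=
    not_cut_inside v₂ (fun c hc => (h2r c hc).1) p hplt hcut
  -- split b at position j-1
  have hdrop : 2 ≤ (b.drop (j-1)).length := by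
    rw [List.length_drop]
    omega
  obtain ⟨z₁, t, hzt⟩ := List.exists_cons_of_ne_nil
    (l := b.drop (j-1)) (fun h => by rw [h] at hdrop; simp at hdrop)
  have hdrop2 : 2 ≤ (z₁ :: t).length := hzt ▸ hdrop
  obtain ⟨z₂, b₂, hz2⟩ := List.exists_cons_of_ne_nil
    (l := t) (fun h => by rw [h] at hdrop2; simp at hdrop2)
  have hb : b = b.take (j-1) ++ z₁ :: z₂ :: b₂ := by
    conv_lhs => rw [← List.take_append_drop (j-1) b]
    rw [hzt, hz2]
  have hzz : ((z₁:ℤ) - z₂).natAbs = 1 := run_adj (h2r b (by rw [hv₂]; simp)) hb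
  set A := m₁.flatten ++ b.take (j-1) with hA
  set B := b₂ ++ m₂.flatten with hB
  have hAlen : A.length = p - 1 := by
    rw [hA, List.length_append, List.length_take]
    omega
  have hu : v₂.flatten = A ++ z₁ :: z₂ :: B := by
    rw [hv₂, hA, hB]
    simp only [List.flatten_append, List.flatten_cons]
    conv_lhs => rw [hb]
    simp
  set u' := A ++ z₂ :: z₁ :: B with hu'
  have hswap : AdjSwap1 v₂.flatten u' := ⟨A, B, z₁, z₂, hzz, hu, rfl⟩
  have hwu' : (w ∼ u') := Relation.EqvGen.trans _ _ _ h2 (Relation.EqvGen.rel _ _ hswap)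
  obtain ⟨v', he', hf'⟩ := decomposes_unpack hdec h2
  obtain ⟨v'', he'', hf''⟩ := decomposes_unpack hdec hwu'
  -- take p of both are permutations of (v.take i).flatten
  have key : ∀ (V : List (List ℕ)) (x : List ℕ), x = V.flatten →
      List.Forall₂ (Relation.EqvGen AdjSwap1) v V → (x.take p).Perm ((v.take i).flatten) := by
    intro V x hx hF
    have hlens : v.map List.length = V.map List.length := forall₂_map_length hF
    have hp' : ((V.map List.length).take i).sum = p := by rw [← hlens, hi]
    have : x.take p = (V.take i).flatten := by
      rw [hx, ← hp', take_flatten]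
    rw [this]
    exact (perm_flatten_forall₂ (List.forall₂_take i (hF.imp (fun _ _ h => eqv_perm h)))).symm
  have k1 := key v' v₂.flatten he' hf'
  have k2 := key v'' u' he'' hf''
  have hperm : ((v₂.flatten).take p).Perm (u'.take p) := k1.trans k2.symm
  have ht1 : (v₂.flatten).take p = A ++ [z₁] := by
    rw [hu]
    have : p = A.length + 1 := by omega
    rw [this, List.take_append]
    rw [List.take_of_length_le (by omega), Nat.add_sub_cancel_left]
    rfl
  have ht2 : u'.take p = A ++ [z₂] := by
    rw [hu']
    have : p = A.length + 1 := by omega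
    rw [this, List.take_append]
    rw [List.take_of_length_le (by omega), Nat.add_sub_cancel_left]
    rfl
  rw [ht1, ht2] at hperm
  have : z₁ = z₂ := by
    have := (List.perm_append_left_iff A).mp hperm
    simpa using this
  omega

lemma mem_run {l : List ℕ} {a m : ℕ} (hn : l = range' a m ∨ l = (range' a m).reverse)
    {z : ℕ} : z ∈ l ↔ (a ≤ z ∧ z < a + m) := by
  rcases hn with h | h <;> rw [h]
  · exact List.mem_range'_1
  · rw [List.mem_reverse]; exact List.mem_range'_1

lemma run_run_equiv {r s : List ℕ} (hr : ConsecRun r) (hs : ConsecRun s)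
    (h : (r ∼ s)) : s = r ∨ (r.length = 2 ∧ s = r.reverse) := by
  obtain ⟨a, m, hm, hnr⟩ := hr.norm
  obtain ⟨b, k, hk, hns⟩ := hs.norm
  have hperm := eqv_perm h
  have hlen : m = k := by
    have := hperm.length_eq
    rcases hnr with h' | h' <;> rcases hns with h'' | h'' <;>
      rw [h', h''] at this <;> simpa using this
  subst hlen
  have hab : a = b := by
    have h1 : a ∈ r := (mem_run hnr).mpr ⟨le_refl a, by omega⟩
    have h2 : b ∈ s := (mem_run hns).mpr ⟨le_refl b, by omega⟩
    have h3 := (mem_run hns).mp (hperm.mem_iff.mp h1)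
    have h4 := (mem_run hnr).mp (hperm.symm.mem_iff.mp h2)
    omega
  subst hab
  match m, hm with
  | 1, _ =>
    have hr1 : r = [a] := by rcases hnr with h' | h' <;> simp [h', List.range'_succ]
    have hs1 : s = [a] := by rcases hns with h' | h' <;> simp [h', List.range'_succ]
    exact Or.inl (hs1.trans hr1.symm)
  | 2, _ =>
    rw [range'_two] at hnr hns
    have hlen2 : r.length = 2 := by rcases hnr with h' | h' <;> simp [h']
    rcases hnr with h' | h' <;> rcases hns with h'' | h''
    · exact Or.inl (h''.trans h'.symm)
    · exact Or.inr ⟨hlen2, by simp [h', h'']⟩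
    · exact Or.inr ⟨hlen2, by simp [h', h'']⟩
    · exact Or.inl (h''.trans h'.symm)
  | (m+3), _ =>
    have hdiff : 2 ≤ (((a:ℤ)) - (a + m + 2 : ℕ)).natAbs := by push_cast; omega
    have hFr : FP a (a+m+2) (range' a (m+3)) = [a, a+m+2] :=
      FP_range'_pair (by omega) (m+3) a (le_refl a) (by omega)
    rcases hnr with h' | h' <;> rcases hns with h'' | h''
    · exact Or.inl (h''.trans h'.symm)
    · exfalso
      have := eqv_FP hdiff h
      rw [h', h'', FP_reverse, hFr] at this
      simp at this
      omega
    · exfalso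
      have := eqv_FP hdiff h
      rw [h', h'', FP_reverse, hFr] at this
      simp at this
      omega
    · exact Or.inl (h''.trans h'.symm)

lemma uniq {w : List ℕ} {v v₂ : List (List ℕ)}
    (hv : (w ∼ v.flatten)) (hvr : ∀ b ∈ v, ConsecRun b) (hvd : Decomposes v w)
    (h2 : (w ∼ v₂.flatten)) (h2r : ∀ b ∈ v₂, ConsecRun b) (h2d : Decomposes v₂ w) :
    v₂.length = v.length ∧
      ∀ (idx : ℕ) (h1 : idx < v.length) (h2' : idx < v₂.length),
        v₂.get ⟨idx, h2'⟩ = v.get ⟨idx, h1⟩ ∨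
          ((v.get ⟨idx, h1⟩).length = 2 ∧
            v₂.get ⟨idx, h2'⟩ = (v.get ⟨idx, h1⟩).reverse) := by
  have hlen12 : v.flatten.length = v₂.flatten.length := by
    rw [← (eqv_perm hv).length_eq, ← (eqv_perm h2).length_eq]
  have hsum1 : (v.map List.length).sum = v₂.flatten.length := by
    rw [← List.length_flatten, hlen12]
  have hsum2 : (v₂.map List.length).sum = v.flatten.length := by
    rw [← List.length_flatten, hlen12]
  have hcuts1 := cut_rigid hvd h2 h2r hsum1
  have hcuts2 := cut_rigid h2d hv hvr hsum2
  have hpos : ∀ V : List (List ℕ), (∀ b ∈ V, ConsecRun b) →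
      ∀ a ∈ V.map List.length, 0 < a := by
    intro V hV a ha
    obtain ⟨b, hb, hba⟩ := List.mem_map.mp ha
    rw [← hba]
    exact List.length_pos_of_ne_nil (hV b hb).1
  have lens : v.map List.length = v₂.map List.length := by
    apply cutlens_eq _ _ (hpos v hvr) (hpos v₂ h2r) _ hcuts1 hcuts2
    rw [hsum1, List.length_flatten]
  constructor
  · have := congrArg List.length lens
    simpa using this.symm
  · obtain ⟨v', he', hf'⟩ := decomposes_unpack hvd h2
    have lens' : v₂.map List.length = v'.map List.length := by
      rw [← lens]
      exact forall₂_map_length hf'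
    have hv2v' : v₂ = v' := blocks_eq_of_flatten_eq v₂ v' lens' he'
    subst hv2v'
    obtain ⟨hlen', hget'⟩ := List.forall₂_iff_get.mp hf'
    intro idx h1 h2'
    have hR := hget' idx h1 h2'
    exact run_run_equiv (hvr _ (List.get_mem v _)) (h2r _ (List.get_mem v₂ _)) hR

lemma flatten_singletons : ∀ w : List ℕ, (w.map (fun x => [x])).flatten = w := by
  intro w
  induction w with
  | nil => rfl
  | cons a w ih => simp [ih]

/-- Let `w` be a permutation (a word, without repetitions) of a finite set of positive
integers. Then the class `⟨w⟩` under `∼` contains a permutation `v = v₁ v₂ ⋯ vₖ`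
such that (a) each block `vᵢ` is an increasing or decreasing run of consecutive
integers, and (b) every `u ∼ w` is a concatenation `v'₁ ⋯ v'ₖ` with `v'ᵢ ∼ vᵢ`.
Moreover `v` is unique up to reversing blocks of length two. -/
theorem stmt9 (w : List ℕ) (hpos : ∀ x ∈ w, 0 < x) (hnd : w.Nodup) :
    ∃ v : List (List ℕ),
      Relation.EqvGen AdjSwap1 w v.flatten ∧
      (∀ b ∈ v, ConsecRun b) ∧
      Decomposes v w ∧
      ∀ v₂ : List (List ℕ),
        Relation.EqvGen AdjSwap1 w v₂.flatten →
        (∀ b ∈ v₂, ConsecRun b) →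
        Decomposes v₂ w →
        v₂.length = v.length ∧
          ∀ (idx : ℕ) (h1 : idx < v.length) (h2 : idx < v₂.length),
            v₂.get ⟨idx, h2⟩ = v.get ⟨idx, h1⟩ ∨
              ((v.get ⟨idx, h1⟩).length = 2 ∧
                v₂.get ⟨idx, h2⟩ = (v.get ⟨idx, h1⟩).reverse) := by
  set v₀ : List (List ℕ) := w.map (fun x => [x]) with hv₀
  have hflat0 : v₀.flatten = w := flatten_singletons w
  have hr0 : ∀ b ∈ v₀, ConsecRun b := by
    intro b hb
    obtain ⟨x, _, hx⟩ := List.mem_map.mp hb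
    rw [← hx]
    exact ⟨by simp, Or.inl (List.isChain_singleton x)⟩
  have hnd0 : v₀.flatten.Nodup := by rw [hflat0]; exact hnd
  obtain ⟨v, hve, hvr, hvc⟩ := exist_core v₀.length v₀ (le_refl _) hr0 hnd0
  rw [hflat0] at hve hvc
  have hvd : Decomposes v w := by
    intro u hu
    obtain ⟨v'', he'', hf''⟩ := hvc u hu
    obtain ⟨hlen, hget⟩ := List.forall₂_iff_get.mp hf''
    exact ⟨v'', he'', hlen.symm, hget⟩
  refine ⟨v, hve, hvr, hvd, ?_⟩
  intro v₂ h2 h2r h2d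
  exact uniq hve hvr hvd h2 h2r h2d
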